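/- arXiv:1610.02318 — 5 statements merged into one kernel-verified Lean document; each statement's English description precedes it below -/
import Mathlib

section
/- Locality of the conditional Gibbs distribution: for every base station j and every pair of configurations A, B ∈ 𝓑 that agree on all columns other than j, exp(β h(A)) / Σ_v exp(β h(B[j←v])) = exp(β g_j(A)) / Σ_v exp(β g_j(B[j←v])), where the sums run over all columns v ∈ {0,1}^M with Σ_i v_i = K, B[j←v] denotes B with its j-th column replaced by v, and g_j(A) := Σ_{n ∈ Ψ(j)} Σ_{s ⊆ {1,…,N}, j ∈ s} h_n(A,s). That is, the conditional Gibbs probability of BS j's cache given all other caches depends only on the caches of the neighbours Ψ(j). -/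
open Finset Filter

noncomputable section

/-- The configuration space: M×N 0-1 matrices (Bool-valued) whose every column sums to K. -/
def Config (M N K : ℕ) : Finset (Fin M → Fin N → Bool) :=
  Finset.univ.filter fun B =>
    ∀ j : Fin N, (Finset.univ.filter fun i : Fin M => B i j = true).card = K

/-- Σ_{j∈s} B(i,j), the number of base stations in `s` caching content `i`. -/
def colCount {M N : ℕ} (B : Fin M → Fin N → Bool) (i : Fin M) (s : Finset (Fin N)) : ℕ :=
  (s.filter fun j => B i j = true).card

/-- The cache hit rate h(B) = Σ_s w(s) Σ_i λ_i 1{Σ_{j∈s} B(i,j) ≥ 1}. -/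
def hitRate {M N : ℕ} (lam : Fin M → ℝ) (w : Finset (Fin N) → ℝ)
    (B : Fin M → Fin N → Bool) : ℝ :=
  ∑ s : Finset (Fin N), w s * ∑ i : Fin M, lam i * (if 1 ≤ colCount B i s then (1 : ℝ) else 0)

/-- Columns v ∈ {0,1}^M with Σ_i v_i = K. -/
def colSet (M K : ℕ) : Finset (Fin M → Bool) :=
  Finset.univ.filter fun v => (Finset.univ.filter fun i : Fin M => v i = true).card = K

/-- x[j←v] : x with its j-th column replaced by v. -/
def updCol {M N : ℕ} (x : Fin M → Fin N → Bool) (j : Fin N) (v : Fin M → Bool) :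
    Fin M → Fin N → Bool :=
  fun i j' => if j' = j then v i else x i j'

open MeasureTheory
open scoped Classical

/-- C(s) = (⋂_{i∈s} C_i) ∩ (⋃_{i∉s} C_i)ᶜ : the region covered exactly by the BSs in s. -/
def cellRegion {N : ℕ} (C : Fin N → Set (ℝ × ℝ)) (s : Finset (Fin N)) : Set (ℝ × ℝ) :=
  (⋂ i ∈ s, C i) ∩ (⋃ i ∈ (sᶜ : Finset (Fin N)), C i)ᶜ

/-- w(s) = Leb(C(s)). -/
def wvol {N : ℕ} (C : Fin N → Set (ℝ × ℝ)) (s : Finset (Fin N)) : ℝ :=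
  (volume (cellRegion C s)).toReal

/-- h_n(A,s) = Σ_i λ_i w(s) A(i,n) 1{n∈s} / max(1, Σ_{k∈s} A(i,k)). -/
def hns {M N : ℕ} (lam : Fin M → ℝ) (w : Finset (Fin N) → ℝ)
    (A : Fin M → Fin N → Bool) (n : Fin N) (s : Finset (Fin N)) : ℝ :=
  ∑ i : Fin M, lam i * w s * (if A i n then (1 : ℝ) else 0) * (if n ∈ s then (1 : ℝ) else 0) /
    max 1 ((colCount A i s : ℝ))

/-- The neighbourhood Ψ(j) = {n : C_j ∩ C_n ≠ ∅} (note j ∈ Ψ(j)). -/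
def Psi {N : ℕ} (C : Fin N → Set (ℝ × ℝ)) (j : Fin N) : Finset (Fin N) :=
  Finset.univ.filter fun n => (C j ∩ C n).Nonempty

/-- The local energy g_j(A) = Σ_{n ∈ Ψ(j)} Σ_{s ∋ j} h_n(A,s). -/
def gloc {M N : ℕ} (lam : Fin M → ℝ) (C : Fin N → Set (ℝ × ℝ)) (j : Fin N)
    (A : Fin M → Fin N → Bool) : ℝ :=
  ∑ n ∈ Psi C j, ∑ s ∈ Finset.univ.filter (fun s : Finset (Fin N) => j ∈ s),
    hns lam (wvol C) A n s

/-! ### Auxiliary lemmas -/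

lemma colCount_cast {M N : ℕ} (X : Fin M → Fin N → Bool) (i : Fin M) (s : Finset (Fin N)) :
    ((colCount X i s : ℕ) : ℝ)
      = ∑ n : Fin N, (if X i n then (1:ℝ) else 0) * (if n ∈ s then 1 else 0) := by
  rw [colCount, Finset.card_filter]
  push_cast
  have : ∀ n, (if X i n then (1:ℝ) else 0) * (if n ∈ s then 1 else 0)
      = if n ∈ s then (if X i n then (1:ℝ) else 0) else 0 := by
    intro n; split <;> simp
  simp only [this, Finset.sum_ite_mem, Finset.univ_inter]

/-- The hit rate decomposes as the total sum of the local quantities h_n(·,s). -/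
lemma sum_hns_eq_hitRate {M N : ℕ} (lam : Fin M → ℝ) (w : Finset (Fin N) → ℝ)
    (X : Fin M → Fin N → Bool) :
    ∑ s : Finset (Fin N), ∑ n : Fin N, hns lam w X n s = hitRate lam w X := by
  unfold hitRate hns
  refine Finset.sum_congr rfl fun s _ => ?_
  rw [Finset.sum_comm, Finset.mul_sum]
  refine Finset.sum_congr rfl fun i _ => ?_
  have step : ∀ n, lam i * w s * (if X i n then (1:ℝ) else 0) * (if n ∈ s then 1 else 0)
      = lam i * w s * ((if X i n then (1:ℝ) else 0) * (if n ∈ s then 1 else 0)) :=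
    fun n => by ring
  have key : ∑ n : Fin N,
      lam i * w s * (if X i n then (1 : ℝ) else 0) * (if n ∈ s then (1 : ℝ) else 0) /
        max 1 ((colCount X i s : ℝ))
      = lam i * w s * ((colCount X i s : ℝ) / max 1 ((colCount X i s : ℝ))) := by
    simp only [step]
    rw [← Finset.sum_div, ← Finset.mul_sum, ← colCount_cast, mul_div_assoc]
  rw [key]
  rcases Nat.eq_zero_or_pos (colCount X i s) with h | h
  · simp [h]
  · have h1 : (1:ℝ) ≤ (colCount X i s : ℝ) := by exact_mod_cast h
    have h' : 1 ≤ colCount X i s := h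
    rw [max_eq_right h1, div_self (by linarith), if_pos h']
    ring

/-- If j, n ∈ s and C_j ∩ C_n = ∅, then w(s) = 0. -/
lemma wvol_eq_zero {N : ℕ} (C : Fin N → Set (ℝ × ℝ)) {j n : Fin N} {s : Finset (Fin N)}
    (hj : j ∈ s) (hn : n ∈ s) (hdisj : C j ∩ C n = ∅) : wvol C s = 0 := by
  have hsub : cellRegion C s ⊆ C j ∩ C n := by
    intro x hx
    have hx' : x ∈ ⋂ i ∈ s, C i := hx.1
    simp only [Set.mem_iInter] at hx'
    exact ⟨hx' j hj, hx' n hn⟩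
  rw [hdisj, Set.subset_empty_iff] at hsub
  simp [wvol, hsub]

/-- If j ∈ s but n ∉ Ψ(j), then h_n(X,s) = 0 (for any configuration X). -/
lemma hns_eq_zero {M N : ℕ} (lam : Fin M → ℝ) (C : Fin N → Set (ℝ × ℝ))
    (X : Fin M → Fin N → Bool) {j n : Fin N} {s : Finset (Fin N)}
    (hj : j ∈ s) (hn : n ∉ Psi C j) : hns lam (wvol C) X n s = 0 := by
  by_cases hns' : n ∈ s
  · have hdisj : C j ∩ C n = ∅ := by
      simp only [Psi, Finset.mem_filter, Finset.mem_univ, true_and] at hn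
      exact Set.not_nonempty_iff_eq_empty.mp hn
    have := wvol_eq_zero C hj hns' hdisj
    simp [hns, this]
  · simp [hns, hns']

/-- If j ∉ s, then h_n(X,s) only depends on columns of X other than j. -/
lemma hns_congr {M N : ℕ} (lam : Fin M → ℝ) (w : Finset (Fin N) → ℝ)
    (X Y : Fin M → Fin N → Bool) {j n : Fin N} {s : Finset (Fin N)}
    (hj : j ∉ s) (hXY : ∀ (i : Fin M) (j' : Fin N), j' ≠ j → X i j' = Y i j') :
    hns lam w X n s = hns lam w Y n s := by
  have hcc : ∀ i, colCount X i s = colCount Y i s := by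
    intro i
    unfold colCount
    refine congrArg Finset.card (Finset.filter_congr fun k hk => ?_)
    rw [hXY i k (by rintro rfl; exact hj hk)]
  unfold hns
  refine Finset.sum_congr rfl fun i _ => ?_
  rw [hcc]
  by_cases hn : n ∈ s
  · rw [hXY i n (by rintro rfl; exact hj hn)]
  · simp [hn]

/-- The decomposition h(X) = g_j(X) + rest_j(X). -/
lemma hitRate_decomp {M N : ℕ} (lam : Fin M → ℝ) (C : Fin N → Set (ℝ × ℝ)) (j : Fin N)
    (X : Fin M → Fin N → Bool) :
    hitRate lam (wvol C) X = gloc lam C j X +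
      ∑ s ∈ Finset.univ.filter (fun s : Finset (Fin N) => j ∉ s),
        ∑ n : Fin N, hns lam (wvol C) X n s := by
  rw [← sum_hns_eq_hitRate,
    ← Finset.sum_filter_add_sum_filter_not Finset.univ (fun s : Finset (Fin N) => j ∈ s)]
  congr 1
  have h1 : gloc lam C j X = ∑ n : Fin N,
      ∑ s ∈ Finset.univ.filter (fun s : Finset (Fin N) => j ∈ s), hns lam (wvol C) X n s := by
    rw [gloc]
    refine Finset.sum_subset (Finset.subset_univ _) ?_
    intro n _ hn
    exact Finset.sum_eq_zero fun s hs =>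
      hns_eq_zero lam C X (Finset.mem_filter.mp hs).2 hn
  rw [h1]
  exact Finset.sum_comm

/-- locality of the conditional Gibbs distribution. -/
theorem conditional_gibbs_locality (M N K : ℕ) (hM : 1 ≤ M) (hN : 1 ≤ N)
    (hK : 1 ≤ K) (hKM : K < M)
    (lam : Fin M → ℝ) (hlam : ∀ i, 0 ≤ lam i)
    (C : Fin N → Set (ℝ × ℝ)) (hCmeas : ∀ i, MeasurableSet (C i))
    (hCfin : ∀ i, volume (C i) < ⊤)
    (β : ℝ) (j : Fin N) (A B : Fin M → Fin N → Bool)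
    (hA : A ∈ Config M N K) (hB : B ∈ Config M N K)
    (hagree : ∀ (i : Fin M) (j' : Fin N), j' ≠ j → A i j' = B i j') :
    Real.exp (β * hitRate lam (wvol C) A) /
        (∑ v ∈ colSet M K, Real.exp (β * hitRate lam (wvol C) (updCol B j v))) =
      Real.exp (β * gloc lam C j A) /
        (∑ v ∈ colSet M K, Real.exp (β * gloc lam C j (updCol B j v))) := by
  set r : ℝ := ∑ s ∈ Finset.univ.filter (fun s : Finset (Fin N) => j ∉ s),
      ∑ n : Fin N, hns lam (wvol C) A n s with hr
  have hdecompA : hitRate lam (wvol C) A = gloc lam C j A + r := hitRate_decomp lam C j A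
  have hdecompB : ∀ v, hitRate lam (wvol C) (updCol B j v)
      = gloc lam C j (updCol B j v) + r := by
    intro v
    rw [hitRate_decomp lam C j (updCol B j v), hr]
    congr 1
    refine Finset.sum_congr rfl fun s hs => Finset.sum_congr rfl fun n _ => ?_
    have hjs : j ∉ s := (Finset.mem_filter.mp hs).2
    refine hns_congr lam (wvol C) _ _ hjs fun i j' hj' => ?_
    rw [updCol]
    simp only [if_neg hj']
    exact (hagree i j' hj').symm
  have key : ∀ x : ℝ, Real.exp (β * (x + r)) = Real.exp (β * x) * Real.exp (β * r) := by
    intro x; rw [mul_add, Real.exp_add]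
  rw [hdecompA, key,
    Finset.sum_congr rfl (fun v _ => by rw [hdecompB v, key]),
    ← Finset.sum_mul, mul_div_mul_right _ _ (Real.exp_ne_zero _)]
end
end

section
/- Uniform positivity of the N-step kernel: for every β ≥ 0 and all configurations x, y ∈ 𝓑, the N-fold matrix power of the random-scan Gibbs kernel satisfies P_β^N(x,y) ≥ ( exp(−β Δ) / (N · C(M,K)) )^N, where C(M,K) is the binomial coefficient 'M choose K'. -/
open Finset Filter

noncomputable section

/-- The random-scan Gibbs sampling kernel P_β(x,y). -/
def kernel (M N K : ℕ) (lam : Fin M → ℝ) (w : Finset (Fin N) → ℝ) (β : ℝ)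
    (x y : Fin M → Fin N → Bool) : ℝ :=
  (1 / (N : ℝ)) * ∑ j : Fin N,
    if ∀ (i : Fin M) (j' : Fin N), j' ≠ j → x i j' = y i j' then
      Real.exp (β * hitRate lam w y) /
        ∑ v ∈ colSet M K, Real.exp (β * hitRate lam w (updCol x j v))
    else 0

/-- The random-scan Gibbs kernel as a matrix indexed by the configuration space. -/
def kernelM (M N K : ℕ) (lam : Fin M → ℝ) (w : Finset (Fin N) → ℝ) (β : ℝ) :
    Matrix ↥(Config M N K) ↥(Config M N K) ℝ :=
  Matrix.of fun x y => kernel M N K lam w β x.1 y.1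

/-- max_{B∈𝓑} h(B). -/
def maxHit (M N K : ℕ) (lam : Fin M → ℝ) (w : Finset (Fin N) → ℝ) : ℝ :=
  sSup (hitRate lam w '' ↑(Config M N K))

/-- min_{B∈𝓑} h(B). -/
def minHit (M N K : ℕ) (lam : Fin M → ℝ) (w : Finset (Fin N) → ℝ) : ℝ :=
  sInf (hitRate lam w '' ↑(Config M N K))

/-- Δ = max_{B∈𝓑} h(B) − min_{B∈𝓑} h(B). -/
def Delta (M N K : ℕ) (lam : Fin M → ℝ) (w : Finset (Fin N) → ℝ) : ℝ :=
  maxHit M N K lam w - minHit M N K lam w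

lemma mem_Config' {M N K : ℕ} {B : Fin M → Fin N → Bool} :
    B ∈ Config M N K ↔
      ∀ j : Fin N, (Finset.univ.filter fun i : Fin M => B i j = true).card = K := by
  simp [Config]

lemma card_colSet (M K : ℕ) : (colSet M K).card = M.choose K := by
  have h : (colSet M K).card = ((Finset.univ : Finset (Fin M)).powersetCard K).card := by
    apply Finset.card_bij (fun v _ => Finset.univ.filter fun i => v i = true)
    · intro v hv
      rw [Finset.mem_powersetCard]
      exact ⟨Finset.filter_subset _ _, by simpa [colSet] using hv⟩
    · intro v1 h1 v2 h2 heq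
      funext i
      have := Finset.ext_iff.mp heq i
      simp only [Finset.mem_filter, Finset.mem_univ, true_and] at this
      cases hb : v1 i <;> cases hb2 : v2 i <;> simp_all
    · intro t ht
      rw [Finset.mem_powersetCard] at ht
      refine ⟨fun i => i ∈ t, ?_, ?_⟩
      · simp [colSet]
        convert ht.2 using 2
      · ext i; simp
  rw [h, Finset.card_powersetCard, Finset.card_univ, Fintype.card_fin]

lemma kernel_nonneg (M N K : ℕ) (lam : Fin M → ℝ) (w : Finset (Fin N) → ℝ) (β : ℝ)
    (x y : Fin M → Fin N → Bool) : 0 ≤ kernel M N K lam w β x y := by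
  unfold kernel
  refine mul_nonneg (by positivity) (Finset.sum_nonneg fun j _ => ?_)
  split
  · exact div_nonneg (Real.exp_nonneg _)
      (Finset.sum_nonneg fun v _ => Real.exp_nonneg _)
  · exact le_refl 0

lemma hit_le_max {M N K : ℕ} {lam : Fin M → ℝ} {w : Finset (Fin N) → ℝ}
    {B : Fin M → Fin N → Bool} (hB : B ∈ Config M N K) :
    hitRate lam w B ≤ maxHit M N K lam w :=
  le_csSup (((Config M N K).finite_toSet.image _).bddAbove) ⟨B, hB, rfl⟩

lemma min_le_hit {M N K : ℕ} {lam : Fin M → ℝ} {w : Finset (Fin N) → ℝ}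
    {B : Fin M → Fin N → Bool} (hB : B ∈ Config M N K) :
    minHit M N K lam w ≤ hitRate lam w B :=
  csInf_le (((Config M N K).finite_toSet.image _).bddBelow) ⟨B, hB, rfl⟩

lemma col_mem_colSet {M N K : ℕ} {x : Fin M → Fin N → Bool} (hx : x ∈ Config M N K)
    (j : Fin N) : (fun i => x i j) ∈ colSet M K := by
  simp only [colSet, Finset.mem_filter, Finset.mem_univ, true_and]
  exact mem_Config'.mp hx j

lemma updCol_mem {M N K : ℕ} {x : Fin M → Fin N → Bool} (hx : x ∈ Config M N K)
    (j : Fin N) {v : Fin M → Bool} (hv : v ∈ colSet M K) :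
    updCol x j v ∈ Config M N K := by
  rw [mem_Config'] at hx ⊢
  intro j'
  by_cases h : j' = j
  · subst h
    simp only [updCol, if_pos rfl]
    simpa [colSet] using hv
  · simp only [updCol, if_neg h]
    exact hx j'

lemma kernel_step_ge {M N K : ℕ} {lam : Fin M → ℝ} {w : Finset (Fin N) → ℝ} {β : ℝ}
    (hβ : 0 ≤ β) {x y : Fin M → Fin N → Bool}
    (hx : x ∈ Config M N K) (hy : y ∈ Config M N K) (j : Fin N)
    (hagree : ∀ (i : Fin M) (j' : Fin N), j' ≠ j → x i j' = y i j') :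
    Real.exp (-β * Delta M N K lam w) / ((N : ℝ) * (M.choose K : ℝ)) ≤
      kernel M N K lam w β x y := by
  have hKM' : K ≤ M := by
    rw [← mem_Config'.mp hx j]
    exact (Finset.card_filter_le _ _).trans (by simp)
  have hchoose : (0 : ℝ) < (M.choose K : ℝ) := by
    exact_mod_cast Nat.choose_pos hKM'
  set D := ∑ v ∈ colSet M K, Real.exp (β * hitRate lam w (updCol x j v)) with hD
  have hD0 : 0 < D :=
    Finset.sum_pos (fun v _ => Real.exp_pos _) ⟨_, col_mem_colSet hx j⟩
  have hDle : D ≤ Real.exp (β * maxHit M N K lam w) * (M.choose K : ℝ) := by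
    calc D ≤ ∑ _v ∈ colSet M K, Real.exp (β * maxHit M N K lam w) :=
          Finset.sum_le_sum fun v hv => Real.exp_le_exp.mpr
            (mul_le_mul_of_nonneg_left (hit_le_max (updCol_mem hx j hv)) hβ)
      _ = Real.exp (β * maxHit M N K lam w) * (M.choose K : ℝ) := by
          rw [Finset.sum_const, card_colSet, nsmul_eq_mul, mul_comm]
  have key : Real.exp (-β * Delta M N K lam w) / (M.choose K : ℝ) ≤
      Real.exp (β * hitRate lam w y) / D := by
    have heq : -β * Delta M N K lam w =
        β * minHit M N K lam w - β * maxHit M N K lam w := by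
      unfold Delta; ring
    rw [heq, Real.exp_sub, div_div]
    exact div_le_div₀ (Real.exp_nonneg _)
      (Real.exp_le_exp.mpr (mul_le_mul_of_nonneg_left (min_le_hit hy) hβ)) hD0 hDle
  have hterm : Real.exp (β * hitRate lam w y) / D ≤
      ∑ j' : Fin N,
        if ∀ (i : Fin M) (j'' : Fin N), j'' ≠ j' → x i j'' = y i j'' then
          Real.exp (β * hitRate lam w y) /
            ∑ v ∈ colSet M K, Real.exp (β * hitRate lam w (updCol x j' v))
        else 0 := by
    have := Finset.single_le_sum (f := fun j' : Fin N =>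
        if ∀ (i : Fin M) (j'' : Fin N), j'' ≠ j' → x i j'' = y i j'' then
          Real.exp (β * hitRate lam w y) /
            ∑ v ∈ colSet M K, Real.exp (β * hitRate lam w (updCol x j' v))
        else 0)
      (fun j' _ => by
        split
        · exact div_nonneg (Real.exp_nonneg _)
            (Finset.sum_nonneg fun v _ => Real.exp_nonneg _)
        · exact le_refl 0)
      (Finset.mem_univ j)
    simpa [if_pos hagree] using this
  calc Real.exp (-β * Delta M N K lam w) / ((N : ℝ) * (M.choose K : ℝ))
      = (1 / (N : ℝ)) * (Real.exp (-β * Delta M N K lam w) / (M.choose K : ℝ)) := by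
        rw [div_mul_div_comm, one_mul]
    _ ≤ (1 / (N : ℝ)) * (Real.exp (β * hitRate lam w y) / D) :=
        mul_le_mul_of_nonneg_left key (by positivity)
    _ ≤ kernel M N K lam w β x y := by
        unfold kernel
        exact mul_le_mul_of_nonneg_left hterm (by positivity)

lemma pow_entry_nonneg {α : Type*} [Fintype α] [DecidableEq α]
    (P : Matrix α α ℝ) (hP : ∀ a b, 0 ≤ P a b) :
    ∀ n (a b : α), 0 ≤ (P ^ n) a b := by
  intro n
  induction n with
  | zero => intro a b; simp only [pow_zero, Matrix.one_apply]; split <;> norm_num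
  | succ n ih =>
    intro a b
    rw [pow_succ, Matrix.mul_apply]
    exact Finset.sum_nonneg fun k _ => mul_nonneg (ih a k) (hP k b)

lemma pow_entry_ge {α : Type*} [Fintype α] [DecidableEq α]
    (P : Matrix α α ℝ) (hP : ∀ a b, 0 ≤ P a b) {c : ℝ} (hc : 0 ≤ c)
    (z : ℕ → α) (n : ℕ) (hz : ∀ t < n, c ≤ P (z t) (z (t + 1))) :
    c ^ n ≤ (P ^ n) (z 0) (z n) := by
  induction n with
  | zero => simp [Matrix.one_apply]
  | succ n ih =>
    have h1 : c ^ n ≤ (P ^ n) (z 0) (z n) :=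
      ih fun t ht => hz t (ht.trans (Nat.lt_succ_self n))
    rw [pow_succ, pow_succ, Matrix.mul_apply]
    calc c ^ n * c ≤ (P ^ n) (z 0) (z n) * P (z n) (z (n + 1)) :=
          mul_le_mul h1 (hz n (Nat.lt_succ_self n)) hc (pow_entry_nonneg P hP n _ _)
      _ ≤ ∑ k, (P ^ n) (z 0) k * P k (z (n + 1)) :=
          Finset.single_le_sum (f := fun k => (P ^ n) (z 0) k * P k (z (n + 1)))
            (fun k _ => mul_nonneg (pow_entry_nonneg P hP n _ _)
            (hP k _)) (Finset.mem_univ (z n))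

/-- uniform positivity of the N-step kernel:
P_β^N(x,y) ≥ (exp(−βΔ)/(N·C(M,K)))^N for all configurations x, y. -/
theorem nstep_kernel_uniformly_positive (M N K : ℕ) (hM : 1 ≤ M) (hN : 1 ≤ N)
    (hK : 1 ≤ K) (hKM : K < M)
    (lam : Fin M → ℝ) (hlam : ∀ i, 0 ≤ lam i)
    (w : Finset (Fin N) → ℝ) (hw : ∀ s, 0 ≤ w s)
    (β : ℝ) (hβ : 0 ≤ β) (x y : ↥(Config M N K)) :
    (Real.exp (-β * Delta M N K lam w) / ((N : ℝ) * (M.choose K : ℝ))) ^ N ≤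
      (kernelM M N K lam w β ^ N) x y := by
  set c := Real.exp (-β * Delta M N K lam w) / ((N : ℝ) * (M.choose K : ℝ)) with hc
  have hc0 : 0 ≤ c := by positivity
  -- the path
  have hzmem : ∀ t : ℕ,
      (fun i (j : Fin N) => if (j : ℕ) < t then y.1 i j else x.1 i j) ∈ Config M N K := by
    intro t
    rw [mem_Config']
    intro j
    by_cases h : (j : ℕ) < t
    · simp only [if_pos h]
      exact mem_Config'.mp y.2 j
    · simp only [if_neg h]
      exact mem_Config'.mp x.2 j
  set z : ℕ → ↥(Config M N K) := fun t =>
    ⟨fun i (j : Fin N) => if (j : ℕ) < t then y.1 i j else x.1 i j, hzmem t⟩ with hzdef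
  have hz0 : z 0 = x := by
    apply Subtype.ext; funext i j; simp [hzdef]
  have hzN : z N = y := by
    apply Subtype.ext; funext i j; simp [hzdef, j.isLt]
  have hstep : ∀ t < N, c ≤ kernelM M N K lam w β (z t) (z (t + 1)) := by
    intro t ht
    have hagree : ∀ (i : Fin M) (j' : Fin N), j' ≠ ⟨t, ht⟩ →
        (z t).1 i j' = (z (t + 1)).1 i j' := by
      intro i j' hne
      have hne' : (j' : ℕ) ≠ t := fun h => hne (Fin.ext h)
      simp only [hzdef]
      by_cases h : (j' : ℕ) < t
      · rw [if_pos h, if_pos (h.trans (Nat.lt_succ_self t))]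
      · rw [if_neg h, if_neg (by omega)]
    exact kernel_step_ge hβ (z t).2 (z (t + 1)).2 ⟨t, ht⟩ hagree
  have := pow_entry_ge (kernelM M N K lam w β)
    (fun a b => kernel_nonneg M N K lam w β a.1 b.1) hc0 z N hstep
  rwa [hz0, hzN] at this
end
end

section
/- Eventual monotone decay of the Gibbs probability of a non-maximizer: if B ∈ 𝓑 satisfies h(B) < max_{B'∈𝓑} h(B'), then there exists β₀ ∈ ℝ such that the map β ↦ π_β(B) is nonincreasing on [β₀, ∞), and lim_{β→∞} π_β(B) = 0. -/
open Finset Filter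

noncomputable section

/-- The Gibbs distribution π_β(B) = exp(β h(B)) / Σ_{B'∈𝓑} exp(β h(B')). -/
def gibbs (M N K : ℕ) (lam : Fin M → ℝ) (w : Finset (Fin N) → ℝ) (β : ℝ)
    (B : Fin M → Fin N → Bool) : ℝ :=
  Real.exp (β * hitRate lam w B) / ∑ B' ∈ Config M N K, Real.exp (β * hitRate lam w B')

set_option maxHeartbeats 1000000 in
/-- if h(B) < max h then π_β(B) is eventually nonincreasing in β,
and π_β(B) → 0 as β → ∞. -/
theorem gibbs_prob_of_nonmaximizer_eventually_decreasing (M N K : ℕ)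
    (hM : 1 ≤ M) (hN : 1 ≤ N) (hK : 1 ≤ K) (hKM : K < M)
    (lam : Fin M → ℝ) (hlam : ∀ i, 0 ≤ lam i)
    (w : Finset (Fin N) → ℝ) (hw : ∀ s, 0 ≤ w s)
    (B : Fin M → Fin N → Bool) (hB : B ∈ Config M N K)
    (hlt : hitRate lam w B < maxHit M N K lam w) :
    (∃ β₀ : ℝ, AntitoneOn (fun β : ℝ => gibbs M N K lam w β B) (Set.Ici β₀)) ∧
      Tendsto (fun β : ℝ => gibbs M N K lam w β B) atTop (nhds 0) := by
  classical
  set hr := hitRate lam w with hhr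
  obtain ⟨Bs, hBs, hmaxi⟩ := (Config M N K).exists_max_image hr ⟨B, hB⟩
  have hmaxle : maxHit M N K lam w ≤ hr Bs := by
    apply csSup_le ⟨hr B, Set.mem_image_of_mem _ hB⟩
    rintro x ⟨b, hb, rfl⟩; exact hmaxi b hb
  have hdpos : 0 < hr Bs - hr B := by linarith
  set d : (Fin M → Fin N → Bool) → ℝ := fun B' => hr B' - hr B with hd
  set g : ℝ → ℝ := fun β => ∑ B' ∈ Config M N K, Real.exp (β * d B') with hg
  have hgpos : ∀ β, 0 < g β := fun β =>
    Finset.sum_pos (fun _ _ => Real.exp_pos _) ⟨B, hB⟩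
  have hZpos : ∀ β, (0:ℝ) < ∑ B' ∈ Config M N K, Real.exp (β * hr B') := fun β =>
    Finset.sum_pos (fun _ _ => Real.exp_pos _) ⟨B, hB⟩
  have hgibbs : ∀ β, gibbs M N K lam w β B = 1 / g β := by
    intro β
    rw [gibbs, hg]
    simp only [hd, mul_sub, Real.exp_sub]
    rw [← Finset.sum_div, one_div_div]
  -- derivative of g
  have hderiv : ∀ β, HasDerivAt g
      (∑ B' ∈ Config M N K, d B' * Real.exp (β * d B')) β := by
    intro β
    apply HasDerivAt.fun_sum
    intro B' _
    have := (((hasDerivAt_id β).mul_const (d B')).exp)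
    simpa [mul_comm] using this
  set C : ℝ := ∑ B' ∈ Config M N K, |d B'| with hC
  set β₀ : ℝ := max 0 (C / (d Bs) ^ 2) with hβ₀
  have hdBs : 0 < d Bs := hdpos
  have hderiv_nonneg : ∀ x, β₀ ≤ x →
      0 ≤ ∑ B' ∈ Config M N K, d B' * Real.exp (x * d B') := by
    intro x hx
    have hx0 : (0:ℝ) ≤ x := le_trans (le_max_left _ _) hx
    have hxC : C / (d Bs) ^ 2 ≤ x := le_trans (le_max_right _ _) hx
    have hsplit : ∑ B' ∈ Config M N K, d B' * Real.exp (x * d B')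
        = d Bs * Real.exp (x * d Bs)
          + ∑ B' ∈ (Config M N K).erase Bs, d B' * Real.exp (x * d B') :=
      (Finset.add_sum_erase _ _ hBs).symm
    have hbig : C ≤ d Bs * Real.exp (x * d Bs) := by
      have h1 : x * d Bs + 1 ≤ Real.exp (x * d Bs) := Real.add_one_le_exp _
      have h2 : C ≤ x * (d Bs) ^ 2 :=
        (div_le_iff₀ (by positivity)).mp hxC
      nlinarith [Real.exp_pos (x * d Bs)]
    have hrest : -C ≤ ∑ B' ∈ (Config M N K).erase Bs, d B' * Real.exp (x * d B') := by
      have h1 : ∀ B' ∈ (Config M N K).erase Bs,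
          -|d B'| ≤ d B' * Real.exp (x * d B') := by
        intro B' _
        rcases le_or_gt 0 (d B') with h | h
        · have : 0 ≤ d B' * Real.exp (x * d B') := by positivity
          linarith [abs_nonneg (d B')]
        · have he : Real.exp (x * d B') ≤ 1 := by
            rw [Real.exp_le_one_iff]
            exact mul_nonpos_of_nonneg_of_nonpos hx0 h.le
          have : d B' * Real.exp (x * d B') ≥ d B' * 1 :=
            mul_le_mul_of_nonpos_left he h.le
          rw [abs_of_neg h]; linarith
      have hCe : ∑ B' ∈ (Config M N K).erase Bs, |d B'| ≤ C :=
        Finset.sum_le_sum_of_subset_of_nonneg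
          (Finset.erase_subset _ _) (fun _ _ _ => abs_nonneg _)
      have h2 : ∑ B' ∈ (Config M N K).erase Bs, -|d B'|
          ≤ ∑ B' ∈ (Config M N K).erase Bs, d B' * Real.exp (x * d B') :=
        Finset.sum_le_sum h1
      rw [Finset.sum_neg_distrib] at h2
      linarith
    rw [hsplit]; linarith
  have hmono : MonotoneOn g (Set.Ici β₀) := by
    apply monotoneOn_of_deriv_nonneg (convex_Ici β₀)
    · exact Continuous.continuousOn (by
        apply continuous_finset_sum
        intro B' _
        exact (Real.continuous_exp.comp (continuous_id.mul continuous_const)))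
    · intro x hx
      exact (hderiv x).differentiableAt.differentiableWithinAt
    · intro x hx
      rw [(hderiv x).deriv]
      rw [interior_Ici] at hx
      exact hderiv_nonneg x (le_of_lt hx)
  constructor
  · refine ⟨β₀, ?_⟩
    intro a ha b hb hab
    simp only [hgibbs]
    exact one_div_le_one_div_of_le (hgpos a) (hmono ha hb hab)
  · apply squeeze_zero (g := fun β => Real.exp (β * (hr B - hr Bs)))
    · intro β
      exact le_of_lt (div_pos (Real.exp_pos _) (hZpos β))
    · intro β
      rw [gibbs]
      have hle : Real.exp (β * hr Bs) ≤ ∑ B' ∈ Config M N K, Real.exp (β * hr B') :=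
        Finset.single_le_sum (f := fun B' => Real.exp (β * hr B'))
          (fun i _ => (Real.exp_pos _).le) hBs
      calc Real.exp (β * hr B) / ∑ B' ∈ Config M N K, Real.exp (β * hr B')
          ≤ Real.exp (β * hr B) / Real.exp (β * hr Bs) :=
            div_le_div_of_nonneg_left (Real.exp_pos _).le (Real.exp_pos _) hle
        _ = Real.exp (β * (hr B - hr Bs)) := by rw [mul_sub, Real.exp_sub]
    · have hneg : hr B - hr Bs < 0 := by linarith
      exact Real.tendsto_exp_atBot.comp (tendsto_id.atTop_mul_const_of_neg hneg)
end
end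

section
/- Summable variation of the Gibbs distributions along any cooling schedule: for every nondecreasing sequence of inverse temperatures (β_T)_{T≥0} with β_T → ∞, one has Σ_{T=0}^∞ Σ_{B∈𝓑} |π_{β_{T+1}}(B) − π_{β_T}(B)| < ∞. -/
open Finset Filter

noncomputable section

namespace GibbsAux

variable {ι : Type*} [DecidableEq ι]

/-- abstract Gibbs measure -/
def p (C : Finset ι) (H : ι → ℝ) (β : ℝ) (B : ι) : ℝ :=
  Real.exp (β * H B) / ∑ B' ∈ C, Real.exp (β * H B')

lemma Zpos (C : Finset ι) (hC : C.Nonempty) (H : ι → ℝ) (β : ℝ) :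
    0 < ∑ B' ∈ C, Real.exp (β * H B') :=
  Finset.sum_pos (fun _ _ => Real.exp_pos _) hC

lemma p_nonneg (C : Finset ι) (H : ι → ℝ) (β : ℝ) (B : ι) : 0 ≤ p C H β B := by
  unfold p
  positivity

lemma p_sum (C : Finset ι) (hC : C.Nonempty) (H : ι → ℝ) (β : ℝ) :
    ∑ B ∈ C, p C H β B = 1 := by
  unfold p
  rw [← Finset.sum_div, div_self (Zpos C hC H β).ne']

lemma p_alt (C : Finset ι) (H : ι → ℝ) (β : ℝ) (B : ι) :
    p C H β B = (∑ B' ∈ C, Real.exp (β * (H B' - H B)))⁻¹ := by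
  have h : ∑ B' ∈ C, Real.exp (β * (H B' - H B))
      = (∑ B' ∈ C, Real.exp (β * H B')) / Real.exp (β * H B) := by
    rw [Finset.sum_div]
    refine Finset.sum_congr rfl fun B' _ => ?_
    rw [← Real.exp_sub]
    ring_nf
  rw [p, h, inv_div]

lemma D_pos (C : Finset ι) (hC : C.Nonempty) (H : ι → ℝ) (β : ℝ) (B : ι) :
    0 < ∑ B' ∈ C, Real.exp (β * (H B' - H B)) :=
  Finset.sum_pos (fun _ _ => Real.exp_pos _) hC

/-- Each single-configuration Gibbs probability is eventually monotone in β. -/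
lemma mono_or_anti (C : Finset ι) (hC : C.Nonempty) (H : ι → ℝ) (B : ι) :
    ∃ c : ℝ, 0 ≤ c ∧
      (MonotoneOn (fun β => p C H β B) (Set.Ici c) ∨
        AntitoneOn (fun β => p C H β B) (Set.Ici c)) := by
  by_cases hmax : ∀ B' ∈ C, H B' ≤ H B
  · -- maximizer: p is monotone on ℝ (take c = 0)
    refine ⟨0, le_refl _, Or.inl ?_⟩
    intro x _ y _ hxy
    simp only [p_alt]
    have hDy : 0 < ∑ B' ∈ C, Real.exp (y * (H B' - H B)) := D_pos C hC H y B
    have hle : ∑ B' ∈ C, Real.exp (y * (H B' - H B))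
        ≤ ∑ B' ∈ C, Real.exp (x * (H B' - H B)) := by
      refine Finset.sum_le_sum fun B' hB' => ?_
      have hd : H B' - H B ≤ 0 := sub_nonpos.mpr (hmax B' hB')
      exact Real.exp_le_exp.mpr (mul_le_mul_of_nonpos_right hxy hd)
    gcongr
  · push_neg at hmax
    obtain ⟨B₀, hB₀C, hB₀⟩ := hmax
    set d₀ : ℝ := H B₀ - H B with hd₀def
    have hd₀ : 0 < d₀ := sub_pos.mpr hB₀
    set S : ℝ := ∑ B' ∈ C, |H B' - H B| with hSdef
    have habs : ∀ B' ∈ C, |H B' - H B| ≤ S := fun B' hB' =>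
      Finset.single_le_sum (f := fun B' => |H B' - H B|) (fun _ _ => abs_nonneg _) hB'
    set c : ℝ := max 0 (Real.log (S / d₀) / d₀) with hcdef
    have hc0 : 0 ≤ c := le_max_left _ _
    -- key growth estimate
    have key : ∀ β : ℝ, c ≤ β → S ≤ d₀ * Real.exp (β * d₀) := by
      intro β hβ
      have h1 : Real.log (S / d₀) / d₀ ≤ β := le_trans (le_max_right _ _) hβ
      have h2 : Real.log (S / d₀) ≤ β * d₀ := by
        rw [div_le_iff₀ hd₀] at h1
        linarith
      have h3 : S / d₀ ≤ Real.exp (β * d₀) :=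
        le_trans (Real.le_exp_log _) (Real.exp_le_exp.mpr h2)
      rw [div_le_iff₀ hd₀] at h3
      linarith
    have Gnn : ∀ β : ℝ, c ≤ β →
        0 ≤ ∑ B' ∈ C, (H B' - H B) * Real.exp (β * (H B' - H B)) := by
      intro β hβ
      have hβ0 : 0 ≤ β := le_trans hc0 hβ
      rw [← Finset.add_sum_erase _ _ hB₀C]
      have hrest : ∀ B' ∈ C.erase B₀,
          -|H B' - H B| ≤ (H B' - H B) * Real.exp (β * (H B' - H B)) := by
        intro B' _
        set d : ℝ := H B' - H B
        rcases le_or_gt 0 d with hd | hd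
        · have : 0 ≤ d * Real.exp (β * d) := by positivity
          linarith [abs_nonneg d]
        · have he1 : Real.exp (β * d) ≤ 1 := by
            rw [Real.exp_le_one_iff]
            exact mul_nonpos_of_nonneg_of_nonpos hβ0 hd.le
          have he0 : 0 < Real.exp (β * d) := Real.exp_pos _
          have habs' : -|d| = d := by rw [abs_of_neg hd]; ring
          rw [habs']
          nlinarith
      have hsum : ∑ B' ∈ C.erase B₀, -|H B' - H B|
          ≤ ∑ B' ∈ C.erase B₀, (H B' - H B) * Real.exp (β * (H B' - H B)) :=
        Finset.sum_le_sum hrest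
      have hS' : ∑ B' ∈ C.erase B₀, -|H B' - H B| = -(∑ B' ∈ C.erase B₀, |H B' - H B|) := by
        rw [Finset.sum_neg_distrib]
      have hS2 : ∑ B' ∈ C.erase B₀, |H B' - H B| ≤ S := by
        rw [hSdef]
        exact Finset.sum_le_sum_of_subset_of_nonneg (Finset.erase_subset _ _)
          (fun _ _ _ => abs_nonneg _)
      have hmain : S ≤ (H B₀ - H B) * Real.exp (β * (H B₀ - H B)) := key β hβ
      have : -(S : ℝ) ≤ ∑ B' ∈ C.erase B₀, (H B' - H B) * Real.exp (β * (H B' - H B)) := by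
        calc -(S : ℝ) ≤ -(∑ B' ∈ C.erase B₀, |H B' - H B|) := by linarith
        _ = ∑ B' ∈ C.erase B₀, -|H B' - H B| := hS'.symm
        _ ≤ _ := hsum
      linarith
    refine ⟨c, hc0, Or.inr ?_⟩
    intro x hx y hy hxy
    simp only [p_alt]
    have hDx : 0 < ∑ B' ∈ C, Real.exp (x * (H B' - H B)) := D_pos C hC H x B
    have hle : ∑ B' ∈ C, Real.exp (x * (H B' - H B))
        ≤ ∑ B' ∈ C, Real.exp (y * (H B' - H B)) := by
      have hterm : ∀ B' ∈ C, (y - x) * ((H B' - H B) * Real.exp (x * (H B' - H B)))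
          ≤ Real.exp (y * (H B' - H B)) - Real.exp (x * (H B' - H B)) := by
        intro B' _
        set d : ℝ := H B' - H B
        have h1 : (y * d - x * d) + 1 ≤ Real.exp (y * d - x * d) := Real.add_one_le_exp _
        have h2 : Real.exp (y * d - x * d) * Real.exp (x * d) = Real.exp (y * d) := by
          rw [← Real.exp_add]; ring_nf
        have he : 0 < Real.exp (x * d) := Real.exp_pos _
        nlinarith
      have hsum := Finset.sum_le_sum hterm
      rw [← Finset.mul_sum, Finset.sum_sub_distrib] at hsum
      have hG := Gnn x hx
      nlinarith
    gcongr

/-- telescoping sum -/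
lemma tel (f : ℕ → ℝ) {m n : ℕ} (h : m ≤ n) :
    ∑ T ∈ Finset.Ico m n, (f (T + 1) - f T) = f n - f m := by
  induction n, h using Nat.le_induction with
  | base => simp
  | succ n hn ih => rw [Finset.sum_Ico_succ_top hn, ih]; ring

end GibbsAux

lemma config_nonempty (M N K : ℕ) (hKM : K < M) : (Config M N K).Nonempty := by
  refine ⟨fun i _ => decide (i.val < K), ?_⟩
  simp only [Config, Finset.mem_filter, Finset.mem_univ, true_and]
  intro j
  have h : (Finset.univ.filter fun i : Fin M => decide (i.val < K) = true)
      = Finset.Iio (⟨K, hKM⟩ : Fin M) := by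
    ext i
    simp [Fin.lt_def]
  rw [h, Fin.card_Iio]

/-- summable variation of the Gibbs distributions along any
nondecreasing cooling schedule β_T → ∞:
Σ_T Σ_{B∈𝓑} |π_{β_{T+1}}(B) − π_{β_T}(B)| < ∞. -/
theorem gibbs_variation_summable (M N K : ℕ) (hM : 1 ≤ M) (hN : 1 ≤ N)
    (hK : 1 ≤ K) (hKM : K < M)
    (lam : Fin M → ℝ) (hlam : ∀ i, 0 ≤ lam i)
    (w : Finset (Fin N) → ℝ) (hw : ∀ s, 0 ≤ w s)
    (βs : ℕ → ℝ) (hmono : Monotone βs) (hlim : Tendsto βs atTop atTop) :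
    Summable (fun T : ℕ => ∑ B ∈ Config M N K,
      |gibbs M N K lam w (βs (T + 1)) B - gibbs M N K lam w (βs T) B|) := by
  classical
  set C := Config M N K with hCdef
  have hC : C.Nonempty := config_nonempty M N K hKM
  set H := hitRate lam w with hHdef
  have hgp : ∀ β B, gibbs M N K lam w β B = GibbsAux.p C H β B := fun _ _ => rfl
  -- choose a uniform threshold
  choose c hc0 hcmono using GibbsAux.mono_or_anti C hC H
  have hne : (Finset.univ : Finset (Fin M → Fin N → Bool)).Nonempty :=
    Finset.univ_nonempty
  set βbar : ℝ := Finset.univ.sup' hne c with hβbar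
  have hcle : ∀ B, c B ≤ βbar := fun B => Finset.le_sup' c (Finset.mem_univ B)
  obtain ⟨T0, hT0⟩ := Filter.eventually_atTop.mp (hlim.eventually_ge_atTop βbar)
  have hgoal : ∀ T : ℕ, (∑ B ∈ Config M N K,
      |gibbs M N K lam w (βs (T + 1)) B - gibbs M N K lam w (βs T) B|)
      = ∑ B ∈ C, |GibbsAux.p C H (βs (T + 1)) B - GibbsAux.p C H (βs T) B| := fun _ => rfl
  have hann : ∀ T : ℕ, (0:ℝ) ≤ ∑ B ∈ Config M N K,
      |gibbs M N K lam w (βs (T + 1)) B - gibbs M N K lam w (βs T) B| :=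
    fun T => Finset.sum_nonneg fun _ _ => abs_nonneg _
  refine summable_of_sum_range_le (c := (∑ T ∈ Finset.range T0, ∑ B ∈ Config M N K,
      |gibbs M N K lam w (βs (T + 1)) B - gibbs M N K lam w (βs T) B|) + 2) hann ?_
  intro n
  rcases le_total n T0 with hn | hn
  · have h1 : ∑ T ∈ Finset.range n, ∑ B ∈ Config M N K,
        |gibbs M N K lam w (βs (T + 1)) B - gibbs M N K lam w (βs T) B|
        ≤ ∑ T ∈ Finset.range T0, ∑ B ∈ Config M N K,
        |gibbs M N K lam w (βs (T + 1)) B - gibbs M N K lam w (βs T) B| :=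
      Finset.sum_le_sum_of_subset_of_nonneg (Finset.range_subset_range.mpr hn)
        (fun T _ _ => hann T)
    linarith
  · have hsplit : ∑ T ∈ Finset.range n, ∑ B ∈ Config M N K,
        |gibbs M N K lam w (βs (T + 1)) B - gibbs M N K lam w (βs T) B|
        = (∑ T ∈ Finset.range T0, ∑ B ∈ Config M N K,
            |gibbs M N K lam w (βs (T + 1)) B - gibbs M N K lam w (βs T) B|)
          + ∑ T ∈ Finset.Ico T0 n, ∑ B ∈ Config M N K,
            |gibbs M N K lam w (βs (T + 1)) B - gibbs M N K lam w (βs T) B| := by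
      rw [Finset.range_eq_Ico, ← Finset.sum_Ico_consecutive _ (Nat.zero_le T0) hn,
        ← Finset.range_eq_Ico]
    rw [hsplit]
    have htail : ∑ T ∈ Finset.Ico T0 n, ∑ B ∈ Config M N K,
        |gibbs M N K lam w (βs (T + 1)) B - gibbs M N K lam w (βs T) B| ≤ 2 := by
      simp only [hgoal]
      rw [Finset.sum_comm]
      have hbound : ∀ B ∈ C, ∑ T ∈ Finset.Ico T0 n,
          |GibbsAux.p C H (βs (T + 1)) B - GibbsAux.p C H (βs T) B|
          ≤ GibbsAux.p C H (βs n) B + GibbsAux.p C H (βs T0) B := by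
        intro B _
        have hmem : ∀ T, T0 ≤ T → βs T ∈ Set.Ici (c B) := fun T hT =>
          Set.mem_Ici.mpr (le_trans (hcle B) (hT0 T hT))
        have hp0 : 0 ≤ GibbsAux.p C H (βs n) B := GibbsAux.p_nonneg C H _ B
        have hp1 : 0 ≤ GibbsAux.p C H (βs T0) B := GibbsAux.p_nonneg C H _ B
        rcases hcmono B with hmon | hant
        · have heq : ∀ T ∈ Finset.Ico T0 n,
              |GibbsAux.p C H (βs (T + 1)) B - GibbsAux.p C H (βs T) B|
              = GibbsAux.p C H (βs (T + 1)) B - GibbsAux.p C H (βs T) B := by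
            intro T hT
            obtain ⟨h1, _⟩ := Finset.mem_Ico.mp hT
            exact abs_of_nonneg (sub_nonneg.mpr
              (hmon (hmem T h1) (hmem (T + 1) (by omega)) (hmono (Nat.le_succ T))))
          rw [Finset.sum_congr rfl heq,
            GibbsAux.tel (fun T => GibbsAux.p C H (βs T) B) hn]
          linarith
        · have heq : ∀ T ∈ Finset.Ico T0 n,
              |GibbsAux.p C H (βs (T + 1)) B - GibbsAux.p C H (βs T) B|
              = -(GibbsAux.p C H (βs (T + 1)) B - GibbsAux.p C H (βs T) B) := by
            intro T hT
            obtain ⟨h1, _⟩ := Finset.mem_Ico.mp hT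
            exact abs_of_nonpos (sub_nonpos.mpr
              (hant (hmem T h1) (hmem (T + 1) (by omega)) (hmono (Nat.le_succ T))))
          rw [Finset.sum_congr rfl heq, Finset.sum_neg_distrib,
            GibbsAux.tel (fun T => GibbsAux.p C H (βs T) B) hn]
          linarith
      calc ∑ B ∈ C, ∑ T ∈ Finset.Ico T0 n,
            |GibbsAux.p C H (βs (T + 1)) B - GibbsAux.p C H (βs T) B|
          ≤ ∑ B ∈ C, (GibbsAux.p C H (βs n) B + GibbsAux.p C H (βs T0) B) :=
            Finset.sum_le_sum hbound
        _ = 2 := by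
            rw [Finset.sum_add_distrib, GibbsAux.p_sum C hC H, GibbsAux.p_sum C hC H]
            norm_num
    linarith
end
end

section
/- Monotonicity of the mean hit rate under the Gibbs distribution: the map β ↦ Σ_{B∈𝓑} π_β(B) · h(B) is nondecreasing on ℝ. -/
open Finset Filter

noncomputable section

/-- Weighted Chebyshev / positive covariance inequality. -/
lemma weighted_chebyshev {ι : Type*} [DecidableEq ι] (s : Finset ι) (p f g : ι → ℝ)
    (hp : ∀ i ∈ s, 0 ≤ p i)
    (hfg : ∀ i ∈ s, ∀ j ∈ s, 0 ≤ (f i - f j) * (g i - g j)) :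
    (∑ i ∈ s, p i * f i) * (∑ i ∈ s, p i * g i) ≤
      (∑ i ∈ s, p i) * (∑ i ∈ s, p i * (f i * g i)) := by
  have key : (∑ i ∈ s, p i) * (∑ i ∈ s, p i * (f i * g i)) -
      (∑ i ∈ s, p i * f i) * (∑ i ∈ s, p i * g i)
      = (1/2) * ∑ i ∈ s, ∑ j ∈ s,
          p i * p j * ((f i - f j) * (g i - g j)) := by
    have e1 : ∑ i ∈ s, ∑ j ∈ s, p i * p j * ((f i - f j) * (g i - g j))
        = ∑ i ∈ s, ∑ j ∈ s,
          (p i * (p j * (f j * g j)) - p i * f i * (p j * g j))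
          + ∑ i ∈ s, ∑ j ∈ s,
          (p j * (p i * (f i * g i)) - p j * f j * (p i * g i)) := by
      rw [← Finset.sum_add_distrib]
      refine Finset.sum_congr rfl fun i _ => ?_
      rw [← Finset.sum_add_distrib]
      exact Finset.sum_congr rfl fun j _ => by ring
    have e2 : ∑ i ∈ s, ∑ j ∈ s,
          (p j * (p i * (f i * g i)) - p j * f j * (p i * g i))
        = ∑ i ∈ s, ∑ j ∈ s,
          (p i * (p j * (f j * g j)) - p i * f i * (p j * g j)) := by
      rw [Finset.sum_comm]
    have e3 : ∑ i ∈ s, ∑ j ∈ s,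
          (p i * (p j * (f j * g j)) - p i * f i * (p j * g j))
        = (∑ i ∈ s, p i) * (∑ i ∈ s, p i * (f i * g i)) -
          (∑ i ∈ s, p i * f i) * (∑ i ∈ s, p i * g i) := by
      rw [Finset.sum_mul_sum, Finset.sum_mul_sum]
      rw [← Finset.sum_sub_distrib]
      exact Finset.sum_congr rfl fun i _ => by rw [← Finset.sum_sub_distrib]
    rw [e1, e2, e3]; ring
  have hnn : 0 ≤ ∑ i ∈ s, ∑ j ∈ s, p i * p j * ((f i - f j) * (g i - g j)) := by
    refine Finset.sum_nonneg fun i hi => Finset.sum_nonneg fun j hj => ?_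
    exact mul_nonneg (mul_nonneg (hp i hi) (hp j hj)) (hfg i hi j hj)
  nlinarith [key, hnn]

/-- the mean hit rate under the Gibbs distribution,
β ↦ Σ_{B∈𝓑} π_β(B) h(B), is nondecreasing on ℝ. -/
theorem gibbs_mean_hit_rate_monotone (M N K : ℕ) (hM : 1 ≤ M) (hN : 1 ≤ N)
    (hK : 1 ≤ K) (hKM : K < M)
    (lam : Fin M → ℝ) (hlam : ∀ i, 0 ≤ lam i)
    (w : Finset (Fin N) → ℝ) (hw : ∀ s, 0 ≤ w s) :
    Monotone (fun β : ℝ => ∑ B ∈ Config M N K,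
      gibbs M N K lam w β B * hitRate lam w B) := by
  intro β₁ β₂ hβ
  set H : (Fin M → Fin N → Bool) → ℝ := hitRate lam w with hH
  have hne := config_nonempty M N K hKM
  have hZ : ∀ β : ℝ, 0 < ∑ B' ∈ Config M N K, Real.exp (β * H B') := by
    intro β
    exact Finset.sum_pos (fun B _ => Real.exp_pos _) hne
  have hre : ∀ β : ℝ, ∑ B ∈ Config M N K, gibbs M N K lam w β B * H B
      = (∑ B ∈ Config M N K, Real.exp (β * H B) * H B) /
        (∑ B' ∈ Config M N K, Real.exp (β * H B')) := by
    intro β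
    rw [Finset.sum_div]
    exact Finset.sum_congr rfl fun B _ => by rw [gibbs, div_mul_eq_mul_div]
  simp only [← hH, hre]
  rw [div_le_div_iff₀ (hZ β₁) (hZ β₂)]
  -- Apply Chebyshev with p = exp(β₁ H), f = H, g = exp((β₂-β₁) H)
  have key := weighted_chebyshev (Config M N K)
      (fun B => Real.exp (β₁ * H B)) H (fun B => Real.exp ((β₂ - β₁) * H B))
      (fun B _ => (Real.exp_pos _).le)
      (fun B _ B' _ => by
        rcases le_total (H B) (H B') with hle | hle
        · have h1 : H B - H B' ≤ 0 := by linarith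
          have h2 : Real.exp ((β₂ - β₁) * H B) ≤ Real.exp ((β₂ - β₁) * H B') :=
            Real.exp_le_exp.mpr (mul_le_mul_of_nonneg_left hle (by linarith))
          nlinarith
        · have h1 : 0 ≤ H B - H B' := by linarith
          have h2 : Real.exp ((β₂ - β₁) * H B') ≤ Real.exp ((β₂ - β₁) * H B) :=
            Real.exp_le_exp.mpr (mul_le_mul_of_nonneg_left hle (by linarith))
          exact mul_nonneg h1 (by linarith))
  have eg : ∀ B, Real.exp (β₁ * H B) * Real.exp ((β₂ - β₁) * H B)
      = Real.exp (β₂ * H B) := by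
    intro B
    rw [← Real.exp_add]
    ring_nf
  calc (∑ B ∈ Config M N K, Real.exp (β₁ * H B) * H B) *
        ∑ B ∈ Config M N K, Real.exp (β₂ * H B)
      = (∑ B ∈ Config M N K, Real.exp (β₁ * H B) * H B) *
        ∑ B ∈ Config M N K, Real.exp (β₁ * H B) * Real.exp ((β₂ - β₁) * H B) := by
        rw [Finset.sum_congr rfl fun B _ => (eg B)]
    _ ≤ (∑ B ∈ Config M N K, Real.exp (β₁ * H B)) *
        ∑ B ∈ Config M N K, Real.exp (β₁ * H B) *
          (H B * Real.exp ((β₂ - β₁) * H B)) := key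
    _ = (∑ B ∈ Config M N K, Real.exp (β₂ * H B) * H B) *
        ∑ B ∈ Config M N K, Real.exp (β₁ * H B) := by
        rw [mul_comm]
        congr 1
        refine Finset.sum_congr rfl fun B _ => ?_
        rw [← eg B]; ring
end
end
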